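/- The matrix G := σ^{-1/2} L^{-1} (I − Σ_{j=1}^k (1 − (σ/(μλ_j + σ))^{1/2}) v_j v_jᵀ) satisfies GGᵀ = Γ̂_cond; that is, G is a square-root factor of the low-rank approximate covariance matrix. -/

import Mathlib

open Matrix MeasureTheory ProbabilityTheory Finset

noncomputable section

lemma vmv_mul {n : ℕ} (a b c d : Fin n → ℝ) :
    vecMulVec a b * vecMulVec c d = (b ⬝ᵥ c) • vecMulVec a d := by
  ext i j
  simp only [Matrix.mul_apply, vecMulVec_apply, Matrix.smul_apply, smul_eq_mul, dotProduct,
    Finset.sum_mul]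
  exact Finset.sum_congr rfl fun l _ => by ring

lemma vmv_transpose {n : ℕ} (a b : Fin n → ℝ) :
    (vecMulVec a b)ᵀ = vecMulVec b a := by
  ext i j
  simp [vecMulVec_apply, mul_comm]

lemma sum_vmv_mul {n : ℕ} (v : Fin n → Fin n → ℝ)
    (horth : ∀ i j, v i ⬝ᵥ v j = if i = j then (1 : ℝ) else 0)
    (S : Finset (Fin n)) (a b : Fin n → ℝ) :
    (∑ i ∈ S, a i • vecMulVec (v i) (v i)) * (∑ j ∈ S, b j • vecMulVec (v j) (v j))
      = ∑ j ∈ S, (a j * b j) • vecMulVec (v j) (v j) := by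
  rw [Finset.sum_mul]
  have : ∀ i ∈ S, (a i • vecMulVec (v i) (v i)) * (∑ j ∈ S, b j • vecMulVec (v j) (v j))
      = (a i * b i) • vecMulVec (v i) (v i) := by
    intro i hi
    rw [Finset.mul_sum]
    have h1 : ∀ j ∈ S, (a i • vecMulVec (v i) (v i)) * (b j • vecMulVec (v j) (v j))
        = if j = i then (a i * b i) • vecMulVec (v i) (v i) else 0 := by
      intro j hj
      rw [smul_mul_assoc, mul_smul_comm, vmv_mul, horth]
      by_cases h : i = j
      · subst h; simp [smul_smul, mul_comm]
      · simp [h, Ne.symm h]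
    rw [Finset.sum_congr rfl h1, Finset.sum_ite_eq' S i]
    simp [hi]
  exact Finset.sum_congr rfl this

theorem stmt2
    (m n : ℕ) (hm : 0 < m) (hn : 0 < n)
    (A : Matrix (Fin m) (Fin n) ℝ) (L : Matrix (Fin n) (Fin n) ℝ) (hL : IsUnit L.det)
    (μ σ : ℝ) (hμ : 0 < μ) (hσ : 0 < σ)
    (v : Fin n → Fin n → ℝ) (lam : Fin n → ℝ)
    (horth : ∀ i j, v i ⬝ᵥ v j = if i = j then (1 : ℝ) else 0)
    (hlam_nonneg : ∀ j, 0 ≤ lam j) (hlam_anti : Antitone lam)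
    (hHdecomp : (L⁻¹)ᵀ * Aᵀ * A * L⁻¹ = ∑ j, lam j • vecMulVec (v j) (v j))
    (k : ℕ) (hk : k ≤ n)
    (Γhat : Matrix (Fin n) (Fin n) ℝ)
    (hΓhat : Γhat = L⁻¹ * (σ • (1 : Matrix (Fin n) (Fin n) ℝ) +
        μ • ∑ j ∈ Finset.univ.filter (fun j : Fin n => (j : ℕ) < k),
          lam j • vecMulVec (v j) (v j))⁻¹ * (L⁻¹)ᵀ)
    (G : Matrix (Fin n) (Fin n) ℝ)
    (hG : G = (Real.sqrt σ)⁻¹ • (L⁻¹ * ((1 : Matrix (Fin n) (Fin n) ℝ) -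
        ∑ j ∈ Finset.univ.filter (fun j : Fin n => (j : ℕ) < k),
          (1 - Real.sqrt (σ / (μ * lam j + σ))) • vecMulVec (v j) (v j)))) :
    G * Gᵀ = Γhat := by
  set S := Finset.univ.filter (fun j : Fin n => (j : ℕ) < k) with hS
  set W : Fin n → Matrix (Fin n) (Fin n) ℝ := fun j => vecMulVec (v j) (v j) with hWdef
  set c : Fin n → ℝ := fun j => 1 - Real.sqrt (σ / (μ * lam j + σ)) with hcdef
  set e : Fin n → ℝ := fun j => μ * lam j / (μ * lam j + σ) with hedef
  set Q : Matrix (Fin n) (Fin n) ℝ := ∑ j ∈ S, c j • W j with hQdef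
  have hpos : ∀ j, 0 < μ * lam j + σ := fun j =>
    add_pos_of_nonneg_of_pos (mul_nonneg hμ.le (hlam_nonneg j)) hσ
  -- coefficient identity relating c and e
  have hce : ∀ j, c j + c j - c j * c j = e j := by
    intro j
    have hfrac : (0:ℝ) ≤ σ / (μ * lam j + σ) := div_nonneg hσ.le (hpos j).le
    have hsq : Real.sqrt (σ / (μ * lam j + σ)) * Real.sqrt (σ / (μ * lam j + σ))
        = σ / (μ * lam j + σ) := Real.mul_self_sqrt hfrac
    have hne : (μ * lam j + σ) ≠ 0 := (hpos j).ne'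
    simp only [hcdef, hedef]
    rw [show (1 - Real.sqrt (σ / (μ * lam j + σ))) + (1 - Real.sqrt (σ / (μ * lam j + σ)))
        - (1 - Real.sqrt (σ / (μ * lam j + σ))) * (1 - Real.sqrt (σ / (μ * lam j + σ)))
        = 1 - Real.sqrt (σ / (μ * lam j + σ)) * Real.sqrt (σ / (μ * lam j + σ)) from by ring,
      hsq]
    field_simp
    ring
  -- the key coefficient identity for the inverse
  have hsum : ∑ j ∈ S, (μ * lam j) • W j
      = σ • (∑ j ∈ S, e j • W j) + ∑ j ∈ S, ((μ * lam j) * e j) • W j := by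
    rw [Finset.smul_sum, ← Finset.sum_add_distrib]
    refine Finset.sum_congr rfl fun j _ => ?_
    rw [smul_smul, ← add_smul]
    congr 1
    have hne : (μ * lam j + σ) ≠ 0 := (hpos j).ne'
    simp only [hedef]
    field_simp
    ring
  -- right inverse of the regularized matrix
  have hMN : (σ • (1 : Matrix (Fin n) (Fin n) ℝ) + μ • ∑ j ∈ S, lam j • W j)
      * (σ⁻¹ • ((1 : Matrix (Fin n) (Fin n) ℝ) - ∑ j ∈ S, e j • W j)) = 1 := by
    have hμT : μ • ∑ j ∈ S, lam j • W j = ∑ j ∈ S, (μ * lam j) • W j := by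
      rw [Finset.smul_sum]; exact Finset.sum_congr rfl fun j _ => by rw [smul_smul]
    rw [hμT, mul_smul_comm]
    have hE : (σ • (1 : Matrix (Fin n) (Fin n) ℝ) + ∑ j ∈ S, (μ * lam j) • W j)
        * ((1 : Matrix (Fin n) (Fin n) ℝ) - ∑ j ∈ S, e j • W j)
        = σ • (1 : Matrix (Fin n) (Fin n) ℝ) := by
      rw [add_mul, mul_sub, mul_sub, mul_one, mul_one, smul_mul_assoc, one_mul,
        sum_vmv_mul v horth]
      rw [hsum]
      abel
    rw [hE, smul_smul, inv_mul_cancel₀ hσ.ne', one_smul]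
  have hinv : (σ • (1 : Matrix (Fin n) (Fin n) ℝ) + μ • ∑ j ∈ S, lam j • W j)⁻¹
      = σ⁻¹ • ((1 : Matrix (Fin n) (Fin n) ℝ) - ∑ j ∈ S, e j • W j) :=
    Matrix.inv_eq_right_inv hMN
  -- square of 1 - Q
  have hQsq : ((1 : Matrix (Fin n) (Fin n) ℝ) - Q) * ((1 : Matrix (Fin n) (Fin n) ℝ) - Q)
      = (1 : Matrix (Fin n) (Fin n) ℝ) - ∑ j ∈ S, e j • W j := by
    have hQQ : Q * Q = ∑ j ∈ S, (c j * c j) • W j := sum_vmv_mul v horth S c c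
    have h2 : Q + Q - ∑ j ∈ S, (c j * c j) • W j = ∑ j ∈ S, e j • W j := by
      rw [hQdef, ← Finset.sum_add_distrib, ← Finset.sum_sub_distrib]
      refine Finset.sum_congr rfl fun j _ => ?_
      rw [← add_smul, ← sub_smul, hce j]
    rw [mul_sub, sub_mul, sub_mul, mul_one, one_mul, mul_one, hQQ, ← h2]
    abel
  -- Q is symmetric
  have hQT : Qᵀ = Q := by
    rw [hQdef, Matrix.transpose_sum]
    refine Finset.sum_congr rfl fun j _ => ?_
    rw [Matrix.transpose_smul, hWdef, vmv_transpose]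
  -- assemble
  have hGT : Gᵀ = (Real.sqrt σ)⁻¹ •
      (((1 : Matrix (Fin n) (Fin n) ℝ) - Q) * (L⁻¹)ᵀ) := by
    rw [hG, Matrix.transpose_smul, Matrix.transpose_mul, Matrix.transpose_sub,
      Matrix.transpose_one, hQT]
  have hss : (Real.sqrt σ)⁻¹ * (Real.sqrt σ)⁻¹ = σ⁻¹ := by
    rw [← mul_inv, Real.mul_self_sqrt hσ.le]
  rw [hGT, hG, smul_mul_assoc, mul_smul_comm, smul_smul, hss, hΓhat, hinv]
  rw [mul_smul_comm, smul_mul_assoc]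
  congr 1
  rw [← hQsq]
  rw [Matrix.mul_assoc, Matrix.mul_assoc, Matrix.mul_assoc]
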